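/- (Proposition 3) Suppose all partial derivatives D^{(α,β)}κ = ∂^{α+β}κ/∂s^α∂t^β with 0 ≤ α+β ≤ 2r+3 exist, are continuous on [0,1]×[0,1], and satisfy |D^{(α,β)}κ(s,t)| ≤ C₂. Then there exists a constant C > 0, independent of n, such that for every (2r+2)-times continuously differentiable x : [0,1] → ℝ, ‖K(y − Q_n y)‖_∞ ≤ C ‖x‖_{2r+2,∞} h^{4r+4}, where y := K(x − Q_n x). -/

import Mathlib

open Set MeasureTheory

/-- Equidistant interpolation nodes: `τ_j^i = t_{j-1} + i·h/(2r)` with `h = 1/n`. -/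
noncomputable def tau (n r j i : ℕ) : ℝ :=
  ((j : ℝ) - 1) / n + (i : ℝ) / (2 * r * n)

/-- The unique polynomial of degree ≤ 2r interpolating `x` at the nodes of `Δ_j`. -/
noncomputable def interpPoly (n r j : ℕ) (x : ℝ → ℝ) : Polynomial ℝ :=
  Lagrange.interpolate (Finset.range (2 * r + 1)) (tau n r j) (fun i => x (tau n r j i))

/-- The interpolatory projection `Q_n x`: on each subinterval `Δ_j = [(j-1)/n, j/n]` it
coincides with the polynomial of degree ≤ 2r interpolating `x` at the nodes `τ_j^i`.
(At a partition point both adjacent pieces take the value `x(t_j)`.) -/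
noncomputable def Qn (n r : ℕ) (x : ℝ → ℝ) (t : ℝ) : ℝ :=
  (interpPoly n r (min n (⌊t * (n : ℝ)⌋₊ + 1)) x).eval t

/-- The Fredholm integral operator with kernel `κ`. -/
noncomputable def Kop (κ : ℝ → ℝ → ℝ) (x : ℝ → ℝ) (s : ℝ) : ℝ :=
  ∫ t in (0:ℝ)..1, κ s t * x t

/-- Supremum norm on `[0,1]`. -/
noncomputable def supNorm (f : ℝ → ℝ) : ℝ :=
  ⨆ t : Set.Icc (0:ℝ) 1, |f t.1|

/-- The nodal polynomial `Φ_j(t) = ∏_{i=0}^{2r} (t − τ_j^i)`. -/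
noncomputable def Phi (n r j : ℕ) (t : ℝ) : ℝ :=
  ∏ i ∈ Finset.range (2 * r + 1), (t - tau n r j i)

/-- `‖x‖_{k,∞} = max_{0 ≤ i ≤ k} ‖x^{(i)}‖_∞` (derivatives taken within `[0,1]`). -/
noncomputable def cknorm (k : ℕ) (x : ℝ → ℝ) : ℝ :=
  ⨆ i : Fin (k + 1), supNorm (iteratedDerivWithin i x (Set.Icc 0 1))

section Nodes

variable {n r : ℕ}

lemma npos (hn : 1 ≤ n) : (0:ℝ) < n := by exact_mod_cast hn

lemma rnpos (hn : 1 ≤ n) (hr : 1 ≤ r) : (0:ℝ) < 2 * r * n := by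
  have h1 : (0:ℝ) < n := npos hn
  have h2 : (0:ℝ) < r := by exact_mod_cast hr
  positivity

lemma tau_sub (j i k : ℕ) : tau n r j i - tau n r j k = ((i:ℝ) - k) / (2 * r * n) := by
  simp [tau, div_sub_div_same]

lemma tau_injOn (hn : 1 ≤ n) (hr : 1 ≤ r) {j : ℕ} :
    Set.InjOn (tau n r j) (Finset.range (2 * r + 1)) := by
  intro a _ b _ hab
  have h := sub_eq_zero_of_eq hab
  rw [tau_sub] at h
  have hpos := rnpos hn hr
  have h2 : (a:ℝ) - b = 0 := by
    have := (div_eq_zero_iff.mp h)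
    rcases this with h' | h'
    · exact h'
    · exact absurd h' hpos.ne'
  have : (a:ℝ) = b := by linarith
  exact_mod_cast this

lemma tau_mem (hn : 1 ≤ n) (hr : 1 ≤ r) {j i : ℕ} (hi : i ≤ 2 * r) :
    tau n r j i ∈ Set.Icc (((j:ℝ) - 1) / n) ((j:ℝ) / n) := by
  have hpos := rnpos hn hr
  have hn' := npos hn
  have key : (i:ℝ) / (2 * r * n) ≤ 1 / n := by
    rw [div_le_div_iff₀ hpos hn']
    have : (i:ℝ) ≤ 2 * r := by exact_mod_cast hi
    nlinarith
  constructor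
  · have : (0:ℝ) ≤ (i:ℝ) / (2 * r * n) := by positivity
    simp only [tau]; linarith
  · simp only [tau]
    have : ((j:ℝ) - 1) / n + 1 / n = (j:ℝ)/n := by field_simp; ring
    linarith

/-- distance between two nodes is at least `1/(2rn)` when distinct, and the gap bound. -/
lemma tau_sub_abs_ge (hn : 1 ≤ n) (hr : 1 ≤ r) {j i k : ℕ} (hik : i ≠ k) :
    1 / (2 * r * n) ≤ |tau n r j i - tau n r j k| := by
  have hpos := rnpos hn hr
  rw [tau_sub, abs_div, abs_of_pos hpos, div_le_div_iff₀ hpos hpos]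
  have : (1:ℝ) ≤ |(i:ℝ) - k| := by
    have : ((i:ℝ) - k) ≠ 0 := by
      intro h
      exact hik (by exact_mod_cast (by linarith [h] : (i:ℝ) = k))
    have h1 : (i:ℝ) - k = ((i:ℤ) - k : ℤ) := by push_cast; ring
    rw [h1] at this ⊢
    rw [← Int.cast_abs]
    exact_mod_cast Int.one_le_abs (by exact_mod_cast this)
  nlinarith

end Nodes
section Piece

variable {n r : ℕ}

lemma tau_zero (j : ℕ) : tau n r j 0 = ((j:ℝ) - 1) / n := by simp [tau]

lemma tau_last (hn : 1 ≤ n) (hr : 1 ≤ r) (j : ℕ) : tau n r j (2 * r) = (j:ℝ) / n := by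
  have hpos := rnpos hn hr
  have hn' := npos hn
  have hr' : (0:ℝ) < r := by exact_mod_cast hr
  simp only [tau]
  push_cast
  field_simp
  ring

lemma Icc_piece_subset (hn : 1 ≤ n) {j : ℕ} (hj1 : 1 ≤ j) (hj2 : j ≤ n) :
    Set.Icc (((j:ℝ) - 1) / n) ((j:ℝ) / n) ⊆ Set.Icc (0:ℝ) 1 := by
  have hn' := npos hn
  apply Set.Icc_subset_Icc
  · apply div_nonneg _ hn'.le
    have : (1:ℝ) ≤ (j:ℝ) := by exact_mod_cast hj1
    linarith
  · rw [div_le_one hn']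
    exact_mod_cast hj2

lemma piece_len (hn : 1 ≤ n) {j : ℕ} : (j:ℝ)/n - ((j:ℝ)-1)/n = 1/n := by
  field_simp
  ring

lemma floor_piece (hn : 1 ≤ n) {j : ℕ} (hj1 : 1 ≤ j) (hj2 : j ≤ n) {t : ℝ}
    (ht : t ∈ Set.Ico (((j:ℝ) - 1) / n) ((j:ℝ) / n)) :
    min n (⌊t * (n:ℝ)⌋₊ + 1) = j := by
  have hn' := npos hn
  obtain ⟨h1, h2⟩ := ht
  have hfl : ⌊t * (n:ℝ)⌋₊ = j - 1 := by
    rw [Nat.floor_eq_iff]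
    · have hc : ((j - 1 : ℕ) : ℝ) = (j:ℝ) - 1 := by
        push_cast [Nat.cast_sub hj1]; ring
      rw [hc]
      constructor
      · calc (j:ℝ) - 1 = (((j:ℝ)-1)/n) * n := by field_simp
          _ ≤ t * n := by apply mul_le_mul_of_nonneg_right h1 hn'.le
      · calc t * n < ((j:ℝ)/n) * n := by apply mul_lt_mul_of_pos_right h2 hn'
          _ = (j:ℝ) - 1 + 1 := by field_simp; ring
    · have h0 : (0:ℝ) ≤ ((j:ℝ)-1)/n := by
        apply div_nonneg _ hn'.le
        have : (1:ℝ) ≤ (j:ℝ) := by exact_mod_cast hj1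
        linarith
      nlinarith [h0.trans h1]
  rw [hfl, Nat.sub_add_cancel hj1, min_eq_right hj2]

lemma Qn_piece (hn : 1 ≤ n) (hr : 1 ≤ r) {j : ℕ} (hj1 : 1 ≤ j) (hj2 : j ≤ n) (g : ℝ → ℝ)
    {t : ℝ} (ht : t ∈ Set.Icc (((j:ℝ) - 1) / n) ((j:ℝ) / n)) :
    Qn n r g t = (interpPoly n r j g).eval t := by
  have hn' := npos hn
  rcases lt_or_eq_of_le ht.2 with h2 | h2
  · rw [Qn, floor_piece hn hj1 hj2 ⟨ht.1, h2⟩]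
  · -- t = j/n
    subst h2
    have hfl : ⌊((j:ℝ)/n) * (n:ℝ)⌋₊ = j := by
      have : ((j:ℝ)/n) * n = (j:ℝ) := by field_simp
      rw [this, Nat.floor_natCast]
    rw [Qn, hfl]
    rcases lt_or_eq_of_le hj2 with hjn | hjn
    · rw [min_eq_right (by omega : j + 1 ≤ n)]
      have e1 : (interpPoly n r (j+1) g).eval ((j:ℝ)/n) = g ((j:ℝ)/n) := by
        have hnode : tau n r (j+1) 0 = (j:ℝ)/n := by
          rw [tau_zero]; push_cast; ring_nf
        rw [← hnode, interpPoly]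
        exact Lagrange.eval_interpolate_at_node _ (tau_injOn hn hr)
          (Finset.mem_range.mpr (by omega))
      have e2 : (interpPoly n r j g).eval ((j:ℝ)/n) = g ((j:ℝ)/n) := by
        have hnode : tau n r j (2*r) = (j:ℝ)/n := tau_last hn hr j
        rw [← hnode, interpPoly]
        exact Lagrange.eval_interpolate_at_node _ (tau_injOn hn hr)
          (Finset.mem_range.mpr (by omega))
      rw [e1, e2]
    · subst hjn
      rw [min_eq_left (by omega)]

end Piece
section PhiBasis

variable {n r : ℕ}

lemma abs_sub_le_piece {a b t u : ℝ} (ht : t ∈ Set.Icc a b) (hu : u ∈ Set.Icc a b) :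
    |t - u| ≤ b - a := by
  rw [abs_sub_le_iff]
  constructor <;> linarith [ht.1, ht.2, hu.1, hu.2]

lemma Phi_abs_le (hn : 1 ≤ n) (hr : 1 ≤ r) {j : ℕ} {t : ℝ}
    (ht : t ∈ Set.Icc (((j:ℝ) - 1) / n) ((j:ℝ) / n)) :
    |Phi n r j t| ≤ (1/n) ^ (2*r+1) := by
  rw [Phi, Finset.abs_prod]
  have := piece_len (n := n) hn (j := j)
  calc ∏ i ∈ Finset.range (2*r+1), |t - tau n r j i|
      ≤ ∏ _i ∈ Finset.range (2*r+1), (1/n : ℝ) := by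
        apply Finset.prod_le_prod (fun _ _ => abs_nonneg _)
        intro i hi
        have hmem := tau_mem hn hr (j := j) (i := i) (by
          simpa using Nat.lt_succ_iff.mp (Finset.mem_range.mp hi))
        calc |t - tau n r j i| ≤ (j:ℝ)/n - ((j:ℝ)-1)/n := abs_sub_le_piece ht hmem
          _ = 1/n := piece_len hn
    _ = (1/n) ^ (2*r+1) := by rw [Finset.prod_const, Finset.card_range]

lemma basis_abs_le (hn : 1 ≤ n) (hr : 1 ≤ r) {j i : ℕ} (hi : i ∈ Finset.range (2*r+1)) {t : ℝ}
    (ht : t ∈ Set.Icc (((j:ℝ) - 1) / n) ((j:ℝ) / n)) :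
    |Polynomial.eval t (Lagrange.basis (Finset.range (2*r+1)) (tau n r j) i)| ≤ (2*r:ℝ)^(2*r) := by
  rw [Lagrange.basis, Polynomial.eval_prod, Finset.abs_prod]
  have hpos := rnpos (n := n) (r := r) hn hr
  have hcard : ((Finset.range (2*r+1)).erase i).card = 2*r := by
    rw [Finset.card_erase_of_mem hi, Finset.card_range]; omega
  calc ∏ k ∈ (Finset.range (2*r+1)).erase i, |Polynomial.eval t (Lagrange.basisDivisor (tau n r j i) (tau n r j k))|
      ≤ ∏ _k ∈ (Finset.range (2*r+1)).erase i, (2*r:ℝ) := by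
        apply Finset.prod_le_prod (fun _ _ => abs_nonneg _)
        intro k hk
        have hki : k ≠ i := (Finset.mem_erase.mp hk).1
        have hkr : k ∈ Finset.range (2*r+1) := (Finset.mem_erase.mp hk).2
        have hik : i ≠ k := hki.symm
        rw [Lagrange.basisDivisor]
        rw [Polynomial.eval_mul, Polynomial.eval_C, Polynomial.eval_sub, Polynomial.eval_X,
          Polynomial.eval_C, abs_mul, abs_inv]
        have h1 : 1 / (2 * (r:ℝ) * n) ≤ |tau n r j i - tau n r j k| := tau_sub_abs_ge hn hr hik
        have h2 : |t - tau n r j k| ≤ 1/n := by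
          have hmem := tau_mem hn hr (j := j) (i := k) (by
            simpa using Nat.lt_succ_iff.mp (Finset.mem_range.mp hkr))
          calc |t - tau n r j k| ≤ (j:ℝ)/n - ((j:ℝ)-1)/n := abs_sub_le_piece ht hmem
            _ = 1/n := piece_len hn
        have habs : (0:ℝ) < |tau n r j i - tau n r j k| := lt_of_lt_of_le (by positivity) h1
        have hinv : |tau n r j i - tau n r j k|⁻¹ ≤ 2 * (r:ℝ) * n := by
          rw [inv_le_comm₀ habs (by positivity)]
          calc (2 * (r:ℝ) * n)⁻¹ = 1 / (2 * (r:ℝ) * n) := by rw [one_div]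
            _ ≤ _ := h1
        calc |tau n r j i - tau n r j k|⁻¹ * |t - tau n r j k|
            ≤ (2 * (r:ℝ) * n) * (1/n) := by
              apply mul_le_mul hinv h2 (abs_nonneg _) (by positivity)
          _ = 2*(r:ℝ) := by field_simp
    _ = (2*r:ℝ)^(2*r) := by rw [Finset.prod_const, hcard]

lemma tau_reflect (hr : 1 ≤ r) {j i : ℕ} (hi : i < 2*r+1) :
    tau n r j i + tau n r j (2*r - i) = (((j:ℝ)-1)/n) + ((j:ℝ)/n) := by
  simp only [tau]
  have hcast : ((2*r - i : ℕ) : ℝ) = 2*(r:ℝ) - i := by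
    push_cast [Nat.cast_sub (by omega : i ≤ 2*r)]; ring
  rw [hcast]
  rcases Nat.eq_zero_or_pos n with hn0 | hn0
  · subst hn0; norm_num
  rcases Nat.eq_zero_or_pos r with hr0 | hr0
  · omega
  have hn' : (0:ℝ) < n := by exact_mod_cast hn0
  have hr' : (0:ℝ) < r := by exact_mod_cast hr0
  field_simp
  ring

lemma Phi_reflect (hr : 1 ≤ r) {j : ℕ} (t : ℝ) :
    Phi n r j ((((j:ℝ)-1)/n) + ((j:ℝ)/n) - t) = - Phi n r j t := by
  simp only [Phi]
  have key : ∀ i ∈ Finset.range (2*r+1),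
      (((j:ℝ)-1)/n) + ((j:ℝ)/n) - t - tau n r j i = -(t - tau n r j (2*r - i)) := by
    intro i hi
    have := tau_reflect (n := n) hr (j := j) (Finset.mem_range.mp hi)
    linarith
  rw [Finset.prod_congr rfl key]
  have hneg : ∀ i ∈ Finset.range (2*r+1), -(t - tau n r j (2*r - i)) =
      (-1) * (t - tau n r j (2*r - i)) := fun i _ => by ring
  rw [Finset.prod_congr rfl hneg, Finset.prod_mul_distrib, Finset.prod_const, Finset.card_range]
  have h2 : ∏ i ∈ Finset.range (2*r+1), (t - tau n r j (2*r - i)) =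
      ∏ i ∈ Finset.range (2*r+1), (t - tau n r j i) := by
    have := Finset.prod_range_reflect (fun i => (t - tau n r j i)) (2*r+1)
    simpa using this
  rw [h2]
  have : (-1:ℝ)^(2*r+1) = -1 := Odd.neg_one_pow ⟨r, by ring⟩
  rw [this]; ring

lemma Phi_integral_zero (hr : 1 ≤ r) {j : ℕ} :
    ∫ t in (((j:ℝ)-1)/n)..((j:ℝ)/n), Phi n r j t = 0 := by
  set a := (((j:ℝ)-1)/n)
  set b := ((j:ℝ)/n)
  have h1 : ∫ t in a..b, Phi n r j ((a+b) - t) = ∫ t in (a+b)-b..(a+b)-a, Phi n r j t :=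
    intervalIntegral.integral_comp_sub_left (Phi n r j) (a+b)
  have h2 : (a+b)-b = a := by ring
  have h3 : (a+b)-a = b := by ring
  rw [h2, h3] at h1
  have h4 : ∀ t, Phi n r j ((a+b) - t) = - Phi n r j t := fun t => by
    have := Phi_reflect (n := n) hr (j := j) t
    simpa using this
  simp only [h4] at h1
  rw [intervalIntegral.integral_neg] at h1
  linarith

end PhiBasis
open Polynomial in
/-- Taylor-style polynomial with coefficients from `iteratedDerivWithin` on `[0,1]`. -/
noncomputable def Tpoly (g : ℝ → ℝ) (m : ℕ) (x₀ : ℝ) : Polynomial ℝ :=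
  ∑ k ∈ Finset.range (m+1),
    C (iteratedDerivWithin k g (Set.Icc 0 1) x₀ / (Nat.factorial k : ℝ)) * (X - C x₀)^k

open Polynomial in
/-- The nodal polynomial. -/
noncomputable def PhiPoly (n r j : ℕ) : Polynomial ℝ :=
  ∏ i ∈ Finset.range (2*r+1), (X - C (tau n r j i))

section TP

variable {n r : ℕ}

lemma Tpoly_eval (g : ℝ → ℝ) (m : ℕ) (x₀ t : ℝ) :
    (Tpoly g m x₀).eval t = ∑ k ∈ Finset.range (m+1),
      (iteratedDerivWithin k g (Set.Icc 0 1) x₀ / (Nat.factorial k : ℝ)) * (t - x₀)^k := by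
  simp [Tpoly, Polynomial.eval_finset_sum]

lemma PhiPoly_eval (t : ℝ) {j : ℕ} : (PhiPoly n r j).eval t = Phi n r j t := by
  simp [PhiPoly, Phi, Polynomial.eval_prod]

lemma PhiPoly_monic {j : ℕ} : (PhiPoly n r j).Monic :=
  Polynomial.monic_prod_of_monic _ _ (fun i _ => Polynomial.monic_X_sub_C _)

lemma PhiPoly_natDegree {j : ℕ} : (PhiPoly n r j).natDegree = 2*r+1 := by
  rw [PhiPoly, Polynomial.natDegree_prod_of_monic _ _ (fun i _ => Polynomial.monic_X_sub_C _)]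
  simp [Polynomial.natDegree_X_sub_C]

lemma PhiPoly_eval_node {j i : ℕ} (hi : i ∈ Finset.range (2*r+1)) :
    (PhiPoly n r j).eval (tau n r j i) = 0 := by
  rw [PhiPoly, Polynomial.eval_prod]
  apply Finset.prod_eq_zero hi
  simp

lemma pow_X_sub_C_coeff_of_lt {x₀ : ℝ} {k b : ℕ} (h : k < b) :
    ((Polynomial.X - Polynomial.C x₀)^k).coeff b = 0 := by
  apply Polynomial.coeff_eq_zero_of_natDegree_lt
  rw [Polynomial.natDegree_pow, Polynomial.natDegree_X_sub_C]
  omega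

lemma pow_X_sub_C_coeff_self {x₀ : ℝ} {k : ℕ} :
    ((Polynomial.X - Polynomial.C x₀)^k).coeff k = 1 := by
  have hm : ((Polynomial.X - Polynomial.C x₀)^k).Monic :=
    (Polynomial.monic_X_sub_C x₀).pow k
  have hd : ((Polynomial.X - Polynomial.C x₀)^k).natDegree = k := by
    rw [Polynomial.natDegree_pow, Polynomial.natDegree_X_sub_C]; ring
  have := hm.coeff_natDegree
  rwa [hd] at this

/-- `Q := T - c·Φ` has degree `< 2r+1`. -/
lemma Q_degree_lt (g : ℝ → ℝ) {j : ℕ} (x₀ : ℝ) :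
    (Tpoly g (2*r+1) x₀ -
      Polynomial.C (iteratedDerivWithin (2*r+1) g (Set.Icc 0 1) x₀ / (Nat.factorial (2*r+1) : ℝ))
        * PhiPoly n r j).degree < ((2*r+1 : ℕ) : WithBot ℕ) := by
  rw [Polynomial.degree_lt_iff_coeff_zero]
  intro b hb
  have hb' : 2*r+1 ≤ b := by exact_mod_cast hb
  rw [Polynomial.coeff_sub, Polynomial.coeff_C_mul]
  rw [Tpoly, Polynomial.finset_sum_coeff]
  rcases eq_or_lt_of_le hb' with hbe | hbl
  · -- b = 2r+1
    subst hbe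
    rw [Finset.sum_eq_single (2*r+1)]
    · rw [Polynomial.coeff_C_mul, pow_X_sub_C_coeff_self]
      have hc : (PhiPoly n r j).coeff (2*r+1) = 1 := by
        have := (PhiPoly_monic (n := n) (r := r) (j := j)).coeff_natDegree
        rwa [PhiPoly_natDegree] at this
      rw [hc]; ring
    · intro k hk hkne
      rw [Polynomial.coeff_C_mul, pow_X_sub_C_coeff_of_lt (by
        rcases Finset.mem_range.mp hk with h; omega), mul_zero]
    · intro h; exact absurd (Finset.self_mem_range_succ (2*r+1)) h
  · -- b > 2r+1
    have h1 : ∀ k ∈ Finset.range (2*r+1+1),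
        (Polynomial.C (iteratedDerivWithin k g (Set.Icc 0 1) x₀ / (Nat.factorial k : ℝ)) *
          (Polynomial.X - Polynomial.C x₀)^k).coeff b = 0 := by
      intro k hk
      rw [Polynomial.coeff_C_mul, pow_X_sub_C_coeff_of_lt (by
        rcases Finset.mem_range.mp hk with h; omega), mul_zero]
    rw [Finset.sum_congr rfl h1, Finset.sum_const, smul_zero]
    have h2 : (PhiPoly n r j).coeff b = 0 := by
      apply Polynomial.coeff_eq_zero_of_natDegree_lt
      rw [PhiPoly_natDegree]; omega
    rw [h2, mul_zero, sub_zero]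

/-- The fundamental decomposition of the interpolation error. -/
lemma interp_decomp (hn : 1 ≤ n) (hr : 1 ≤ r) {j : ℕ} (g : ℝ → ℝ) (t : ℝ) :
    g t - (interpPoly n r j g).eval t =
      (g t - (Tpoly g (2*r+1) (((j:ℝ)-1)/n)).eval t)
      + (iteratedDerivWithin (2*r+1) g (Set.Icc 0 1) (((j:ℝ)-1)/n) / (Nat.factorial (2*r+1) : ℝ))
          * Phi n r j t
      - ∑ i ∈ Finset.range (2*r+1),
          (g (tau n r j i) - (Tpoly g (2*r+1) (((j:ℝ)-1)/n)).eval (tau n r j i))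
            * (Lagrange.basis (Finset.range (2*r+1)) (tau n r j) i).eval t := by
  set x₀ := (((j:ℝ)-1)/n)
  set T := Tpoly g (2*r+1) x₀ with hT
  set c := iteratedDerivWithin (2*r+1) g (Set.Icc 0 1) x₀ / (Nat.factorial (2*r+1) : ℝ)
  set v := tau n r j
  set s := Finset.range (2*r+1)
  set Q := T - Polynomial.C c * PhiPoly n r j with hQ
  have hinj : Set.InjOn v s := tau_injOn hn hr
  -- interpolate is linear in the values
  have hsplit : interpPoly n r j g =
      Lagrange.interpolate s v (fun i => T.eval (v i))
      + Lagrange.interpolate s v (fun i => g (v i) - T.eval (v i)) := by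
    rw [interpPoly, ← map_add]
    congr 1
    funext i
    simp
    rfl
  -- interpolation of T-values equals Q
  have hTQ : Lagrange.interpolate s v (fun i => T.eval (v i)) = Q := by
    have hvals : ∀ i ∈ s, T.eval (v i) = Q.eval (v i) := by
      intro i hi
      rw [hQ]
      simp only [Polynomial.eval_sub, Polynomial.eval_mul, Polynomial.eval_C]
      rw [PhiPoly_eval_node hi]
      ring
    calc Lagrange.interpolate s v (fun i => T.eval (v i))
        = Lagrange.interpolate s v (fun i => Q.eval (v i)) := by
          apply Lagrange.interpolate_eq_of_values_eq_on
          exact hvals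
      _ = Q := by
          symm
          apply Lagrange.eq_interpolate hinj
          rw [Finset.card_range]
          exact Q_degree_lt g x₀
  have heval : (Lagrange.interpolate s v (fun i => g (v i) - T.eval (v i))).eval t
      = ∑ i ∈ s, (g (v i) - T.eval (v i)) * (Lagrange.basis s v i).eval t := by
    rw [Lagrange.interpolate_apply, Polynomial.eval_finset_sum]
    apply Finset.sum_congr rfl
    intro i _
    rw [Polynomial.eval_mul, Polynomial.eval_C]
  rw [hsplit, Polynomial.eval_add, heval, hTQ, hQ]
  simp only [Polynomial.eval_sub, Polynomial.eval_mul, Polynomial.eval_C, PhiPoly_eval]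
  ring

end TP
section Iter

lemma iterSubset {g : ℝ → ℝ} {s : Set ℝ} (hs : s ⊆ Set.Icc (0:ℝ) 1)
    (hus : UniqueDiffOn ℝ s) {m N : ℕ} (hg : ContDiffOn ℝ (N:ℕ) g (Set.Icc 0 1)) (hm : m ≤ N) :
    Set.EqOn (iteratedDerivWithin m g s) (iteratedDerivWithin m g (Set.Icc 0 1)) s := by
  induction m with
  | zero => intro x _; simp
  | succ m IH =>
    intro x hx
    have hmN : m ≤ N := by omega
    have hIH := IH hmN
    rw [iteratedDerivWithin_succ,
      iteratedDerivWithin_succ]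
    rw [derivWithin_congr hIH (hIH hx)]
    apply derivWithin_subset hs (hus.uniqueDiffWithinAt hx)
    have hdiff : DifferentiableOn ℝ (iteratedDerivWithin m g (Set.Icc 0 1)) (Set.Icc 0 1) :=
      hg.differentiableOn_iteratedDerivWithin (by exact_mod_cast hm)
        (uniqueDiffOn_Icc zero_lt_one)
    exact hdiff x (hs hx)

lemma taylor_bound {n r : ℕ} (hn : 1 ≤ n) (hr : 1 ≤ r) {j : ℕ} (hj1 : 1 ≤ j) (hj2 : j ≤ n)
    {g : ℝ → ℝ} {M : ℝ}
    (hg : ContDiffOn ℝ ((2*r+2 : ℕ) : ℕ) g (Set.Icc 0 1))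
    (hM : ∀ k, k ≤ 2*r+2 → ∀ u ∈ Set.Icc (0:ℝ) 1, |iteratedDerivWithin k g (Set.Icc 0 1) u| ≤ M)
    {t : ℝ} (ht : t ∈ Set.Icc (((j:ℝ)-1)/n) ((j:ℝ)/n)) :
    |g t - (Tpoly g (2*r+1) (((j:ℝ)-1)/n)).eval t|
      ≤ M * (1/n)^(2*r+2) / (Nat.factorial (2*r+2) : ℝ) := by
  have hn' := npos hn
  set x₀ : ℝ := (((j:ℝ)-1)/n) with hx₀
  have hsub : Set.Icc x₀ ((j:ℝ)/n) ⊆ Set.Icc (0:ℝ) 1 := Icc_piece_subset hn hj1 hj2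
  have hM0 : 0 ≤ M := le_trans (abs_nonneg _) (hM 0 (by omega) 0 (by norm_num))
  have hRHS : 0 ≤ M * (1/n)^(2*r+2) / (Nat.factorial (2*r+2) : ℝ) := by positivity
  rcases eq_or_lt_of_le ht.1 with h1 | h1
  · -- t = x₀
    have : (Tpoly g (2*r+1) x₀).eval t = g t := by
      rw [← h1, Tpoly_eval]
      rw [Finset.sum_eq_single 0]
      · simp
      · intro k _ hk
        simp [zero_pow hk]
      · simp
    rw [this]; simpa using hRHS
  · -- x₀ < t
    have hsub' : Set.Icc x₀ t ⊆ Set.Icc (0:ℝ) 1 := by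
      apply subset_trans _ hsub
      exact Set.Icc_subset_Icc le_rfl ht.2
    have hEq : Set.EqOn (iteratedDerivWithin (2*r+1) g (Set.Icc x₀ t))
        (iteratedDerivWithin (2*r+1) g (Set.Icc 0 1)) (Set.Icc x₀ t) :=
      iterSubset hsub' (uniqueDiffOn_Icc h1) hg (by omega)
    have hdiff : DifferentiableOn ℝ (iteratedDerivWithin (2*r+1) g (Set.Icc 0 1))
        (Set.Icc 0 1) :=
      hg.differentiableOn_iteratedDerivWithin (by exact_mod_cast (by omega : 2*r+1 < 2*r+2))
        (uniqueDiffOn_Icc zero_lt_one)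
    have hf' : DifferentiableOn ℝ (iteratedDerivWithin (2*r+1) g (Set.Icc x₀ t))
        (Set.Ioo x₀ t) := by
      intro u hu
      have huI : u ∈ Set.Icc x₀ t := Set.Ioo_subset_Icc_self hu
      have h1' : DifferentiableWithinAt ℝ (iteratedDerivWithin (2*r+1) g (Set.Icc 0 1))
          (Set.Icc x₀ t) u := (hdiff u (hsub' huI)).mono hsub'
      exact ((h1'.congr (fun y hy => hEq hy) (hEq huI)).mono Set.Ioo_subset_Icc_self)
    have hf : ContDiffOn ℝ (2*r+1 : ℕ) g (Set.Icc x₀ t) :=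
      (hg.of_le (by exact_mod_cast (by omega : 2*r+1 ≤ 2*r+2))).mono hsub'
    obtain ⟨ξ, hξ, hrem⟩ := taylor_mean_remainder_lagrange (n := 2*r+1) h1.ne
      (by rw [Set.uIcc_of_le h1.le]; exact hf)
      (by rw [Set.uIcc_of_le h1.le, Set.uIoo_of_le h1.le]; exact hf')
    rw [Set.uIcc_of_le h1.le] at hrem
    rw [Set.uIoo_of_le h1.le] at hξ
    have hTT : taylorWithinEval g (2*r+1) (Set.Icc x₀ t) x₀ t = (Tpoly g (2*r+1) x₀).eval t := by
      rw [taylor_within_apply, Tpoly_eval]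
      apply Finset.sum_congr rfl
      intro k hk
      have hkle : k ≤ 2*r+2 := by
        have := Finset.mem_range.mp hk; omega
      have : iteratedDerivWithin k g (Set.Icc x₀ t) x₀ =
          iteratedDerivWithin k g (Set.Icc 0 1) x₀ :=
        iterSubset hsub' (uniqueDiffOn_Icc h1) hg hkle (Set.left_mem_Icc.mpr h1.le)
      rw [this]
      simp [smul_eq_mul]
      ring
    rw [hTT] at hrem
    rw [hrem]
    have hξ' : ξ ∈ Set.Icc x₀ t := Set.Ioo_subset_Icc_self hξ
    have hiter : iteratedDerivWithin (2*r+1+1) g (Set.Icc x₀ t) ξ =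
        iteratedDerivWithin (2*r+2) g (Set.Icc 0 1) ξ := by
      have := iterSubset hsub' (uniqueDiffOn_Icc h1) hg (le_refl (2*r+2))
      have h2 : 2*r+1+1 = 2*r+2 := by omega
      rw [h2]
      exact this hξ'
    rw [abs_div, abs_mul, hiter]
    have hb1 : |iteratedDerivWithin (2*r+2) g (Set.Icc 0 1) ξ| ≤ M :=
      hM _ le_rfl ξ (hsub' hξ')
    have hb2 : |(t - x₀)^(2*r+1+1)| ≤ (1/n)^(2*r+2) := by
      rw [abs_pow]
      have h2 : 2*r+1+1 = 2*r+2 := by omega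
      rw [h2]
      apply pow_le_pow_left₀ (abs_nonneg _)
      rw [abs_of_nonneg (by linarith [ht.1] : (0:ℝ) ≤ t - x₀)]
      have := piece_len (n := n) hn (j := j)
      linarith [ht.2]
    have hfac : |((Nat.factorial (2*r+1+1) : ℕ) : ℝ)| = (Nat.factorial (2*r+2) : ℝ) := by
      rw [abs_of_nonneg (by positivity)]
    rw [hfac]
    gcongr
    try exact abs_nonneg _
end Iter
noncomputable def Lam (r : ℕ) : ℝ := (2*r+1 : ℝ) * (2*(r:ℝ))^(2*r)

noncomputable def CC (r : ℕ) : ℝ :=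
  (1 + Lam r)/(Nat.factorial (2*r+2) : ℝ) + 1/(Nat.factorial (2*r+1) : ℝ)

lemma Lam_nonneg (r : ℕ) : 0 ≤ Lam r := by
  unfold Lam; positivity

lemma CC_pos (r : ℕ) : 0 < CC r := by
  unfold CC
  have := Lam_nonneg r
  positivity

lemma Phi_cont {n r j : ℕ} : Continuous (Phi n r j) := by
  unfold Phi
  exact continuous_finset_prod _ (fun i _ => by continuity)

section Core

variable {n r : ℕ}

/-- bound on `ρ - Sρ` : the Taylor remainder minus its interpolant. -/
lemma rho_bound (hn : 1 ≤ n) (hr : 1 ≤ r) {j : ℕ} (hj1 : 1 ≤ j) (hj2 : j ≤ n)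
    {g : ℝ → ℝ} {M : ℝ}
    (hg : ContDiffOn ℝ ((2*r+2 : ℕ) : ℕ) g (Set.Icc 0 1))
    (hM : ∀ k, k ≤ 2*r+2 → ∀ u ∈ Set.Icc (0:ℝ) 1, |iteratedDerivWithin k g (Set.Icc 0 1) u| ≤ M)
    {t : ℝ} (ht : t ∈ Set.Icc (((j:ℝ)-1)/n) ((j:ℝ)/n)) :
    |(g t - (Tpoly g (2*r+1) (((j:ℝ)-1)/n)).eval t)
      - ∑ i ∈ Finset.range (2*r+1),
          (g (tau n r j i) - (Tpoly g (2*r+1) (((j:ℝ)-1)/n)).eval (tau n r j i))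
            * (Lagrange.basis (Finset.range (2*r+1)) (tau n r j) i).eval t|
      ≤ (1 + Lam r) * (M * (1/n)^(2*r+2) / (Nat.factorial (2*r+2) : ℝ)) := by
  set Mρ := M * (1/n)^(2*r+2) / (Nat.factorial (2*r+2) : ℝ) with hMρ
  have h1 : |g t - (Tpoly g (2*r+1) (((j:ℝ)-1)/n)).eval t| ≤ Mρ :=
    taylor_bound hn hr hj1 hj2 hg hM ht
  have hMρ0 : 0 ≤ Mρ := le_trans (abs_nonneg _) h1
  have h2 : |∑ i ∈ Finset.range (2*r+1),
      (g (tau n r j i) - (Tpoly g (2*r+1) (((j:ℝ)-1)/n)).eval (tau n r j i))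
        * (Lagrange.basis (Finset.range (2*r+1)) (tau n r j) i).eval t| ≤ Lam r * Mρ := by
    calc |∑ i ∈ Finset.range (2*r+1),
        (g (tau n r j i) - (Tpoly g (2*r+1) (((j:ℝ)-1)/n)).eval (tau n r j i))
          * (Lagrange.basis (Finset.range (2*r+1)) (tau n r j) i).eval t|
        ≤ ∑ i ∈ Finset.range (2*r+1),
          |(g (tau n r j i) - (Tpoly g (2*r+1) (((j:ℝ)-1)/n)).eval (tau n r j i))
            * (Lagrange.basis (Finset.range (2*r+1)) (tau n r j) i).eval t| :=
          Finset.abs_sum_le_sum_abs _ _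
      _ ≤ ∑ _i ∈ Finset.range (2*r+1), Mρ * (2*(r:ℝ))^(2*r) := by
          apply Finset.sum_le_sum
          intro i hi
          rw [abs_mul]
          apply mul_le_mul
          · exact taylor_bound hn hr hj1 hj2 hg hM
              (tau_mem hn hr (by simpa using Nat.lt_succ_iff.mp (Finset.mem_range.mp hi)))
          · exact basis_abs_le hn hr hi ht
          · exact abs_nonneg _
          · exact hMρ0
      _ = Lam r * Mρ := by
          rw [Finset.sum_const, Finset.card_range]
          unfold Lam
          push_cast
          ring
  calc |(g t - (Tpoly g (2*r+1) (((j:ℝ)-1)/n)).eval t)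
      - ∑ i ∈ Finset.range (2*r+1),
          (g (tau n r j i) - (Tpoly g (2*r+1) (((j:ℝ)-1)/n)).eval (tau n r j i))
            * (Lagrange.basis (Finset.range (2*r+1)) (tau n r j) i).eval t|
      ≤ |g t - (Tpoly g (2*r+1) (((j:ℝ)-1)/n)).eval t| + |∑ i ∈ Finset.range (2*r+1),
          (g (tau n r j i) - (Tpoly g (2*r+1) (((j:ℝ)-1)/n)).eval (tau n r j i))
            * (Lagrange.basis (Finset.range (2*r+1)) (tau n r j) i).eval t| := abs_sub _ _
    _ ≤ Mρ + Lam r * Mρ := add_le_add h1 h2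
    _ = (1 + Lam r) * Mρ := by ring

lemma c_bound {g : ℝ → ℝ} {M : ℝ} {x₀ : ℝ} (hx₀ : x₀ ∈ Set.Icc (0:ℝ) 1)
    (hM : ∀ k, k ≤ 2*r+2 → ∀ u ∈ Set.Icc (0:ℝ) 1, |iteratedDerivWithin k g (Set.Icc 0 1) u| ≤ M) :
    |iteratedDerivWithin (2*r+1) g (Set.Icc 0 1) x₀ / (Nat.factorial (2*r+1) : ℝ)|
      ≤ M / (Nat.factorial (2*r+1) : ℝ) := by
  rw [abs_div, abs_of_nonneg (by positivity : (0:ℝ) ≤ (Nat.factorial (2*r+1) : ℝ))]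
  gcongr
  exact hM _ (by omega) _ hx₀

end Core
section CoreInt

variable {n r : ℕ}

lemma core_interval (hn : 1 ≤ n) (hr : 1 ≤ r) {j : ℕ} (hj1 : 1 ≤ j) (hj2 : j ≤ n)
    {g : ℝ → ℝ} {M C₂ : ℝ}
    (hg : ContDiffOn ℝ ((2*r+2 : ℕ) : ℕ) g (Set.Icc 0 1))
    (hM : ∀ k, k ≤ 2*r+2 → ∀ u ∈ Set.Icc (0:ℝ) 1, |iteratedDerivWithin k g (Set.Icc 0 1) u| ≤ M)
    {φ : ℝ → ℝ} (hφc : ContinuousOn φ (Set.Icc 0 1))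
    (hφb : ∀ u ∈ Set.Icc (0:ℝ) 1, |φ u| ≤ C₂)
    (hφlip : ∀ u ∈ Set.Icc (0:ℝ) 1, ∀ w ∈ Set.Icc (0:ℝ) 1, |φ u - φ w| ≤ C₂ * |u - w|) :
    |∫ t in (((j:ℝ)-1)/n)..((j:ℝ)/n), φ t * (g t - (interpPoly n r j g).eval t)|
      ≤ CC r * C₂ * M * (1/n)^(2*r+3) := by
  have hn' := npos hn
  set a : ℝ := (((j:ℝ)-1)/n) with ha
  set b : ℝ := ((j:ℝ)/n) with hb
  have hlen : b - a = 1/n := piece_len hn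
  have hab : a ≤ b := by
    have : (0:ℝ) < 1/n := by positivity
    linarith
  have hsub : Set.Icc a b ⊆ Set.Icc (0:ℝ) 1 := Icc_piece_subset hn hj1 hj2
  have haI : a ∈ Set.Icc (0:ℝ) 1 := hsub (Set.left_mem_Icc.mpr hab)
  have hC₂0 : 0 ≤ C₂ := le_trans (abs_nonneg _) (hφb 0 (by norm_num))
  have hM0 : 0 ≤ M := le_trans (abs_nonneg _) (hM 0 (by omega) 0 (by norm_num))
  set T := Tpoly g (2*r+1) a with hT
  set c := iteratedDerivWithin (2*r+1) g (Set.Icc 0 1) a / (Nat.factorial (2*r+1) : ℝ) with hc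
  set S : ℝ → ℝ := fun t => ∑ i ∈ Finset.range (2*r+1),
      (g (tau n r j i) - T.eval (tau n r j i))
        * (Lagrange.basis (Finset.range (2*r+1)) (tau n r j) i).eval t with hS
  set A : ℝ → ℝ := fun t => φ t * ((g t - T.eval t) - S t) with hA
  set B : ℝ → ℝ := fun t => c * (φ t * Phi n r j t) with hB
  set Mρ := M * (1/n)^(2*r+2) / (Nat.factorial (2*r+2) : ℝ) with hMρ
  have hMρ0 : 0 ≤ Mρ := by rw [hMρ]; positivity
  have hgc : ContinuousOn g (Set.Icc a b) := hg.continuousOn.mono hsub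
  have hφc' : ContinuousOn φ (Set.Icc a b) := hφc.mono hsub
  have hScont : Continuous S := by
    apply continuous_finset_sum
    intro i _
    exact continuous_const.mul (Polynomial.continuous_aeval _)
  have hAc : ContinuousOn A (Set.Icc a b) := by
    apply hφc'.mul
    apply ContinuousOn.sub
    · exact hgc.sub (Polynomial.continuous_aeval _).continuousOn
    · exact hScont.continuousOn
  have hBc : ContinuousOn B (Set.Icc a b) := by
    apply continuousOn_const.mul
    exact hφc'.mul Phi_cont.continuousOn
  -- pointwise identity
  have hpt : ∀ t, φ t * (g t - (interpPoly n r j g).eval t) = A t + B t := by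
    intro t
    have := interp_decomp hn hr (j := j) g t
    rw [hA, hB, hS]
    rw [← ha] at this
    rw [this]
    ring
  rw [intervalIntegral.integral_congr (g := fun t => A t + B t) (fun t _ => hpt t)]
  have hint : IntervalIntegrable A volume a b :=
    (hAc.mono (by rw [Set.uIcc_of_le hab])).intervalIntegrable
  have hintB : IntervalIntegrable B volume a b :=
    (hBc.mono (by rw [Set.uIcc_of_le hab])).intervalIntegrable
  rw [intervalIntegral.integral_add hint hintB]
  -- bound for A
  have hboundA : |∫ t in a..b, A t| ≤ (C₂ * ((1 + Lam r) * Mρ)) * (1/n) := by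
    have := intervalIntegral.norm_integral_le_of_norm_le_const
      (C := C₂ * ((1 + Lam r) * Mρ)) (f := A) (a := a) (b := b) ?_
    · rw [Real.norm_eq_abs] at this
      apply le_trans this
      rw [abs_of_nonneg (by linarith : (0:ℝ) ≤ b - a), hlen]
    · intro t ht
      have ht' : t ∈ Set.Icc a b := by
        rw [Set.uIoc_of_le hab] at ht
        exact Set.Ioc_subset_Icc_self ht
      rw [Real.norm_eq_abs, hA, abs_mul]
      apply mul_le_mul (hφb t (hsub ht')) ?_ (abs_nonneg _) hC₂0
      exact rho_bound hn hr hj1 hj2 hg hM ht'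
  -- bound for B
  have hintφΦ1 : IntervalIntegrable (fun t => (φ t - φ a) * Phi n r j t) volume a b := by
    apply ContinuousOn.intervalIntegrable
    rw [Set.uIcc_of_le hab]
    exact (hφc'.sub continuousOn_const).mul Phi_cont.continuousOn
  have hintφΦ2 : IntervalIntegrable (fun t => φ a * Phi n r j t) volume a b := by
    apply ContinuousOn.intervalIntegrable
    rw [Set.uIcc_of_le hab]
    exact continuousOn_const.mul Phi_cont.continuousOn
  have hsplitB : ∫ t in a..b, B t = c * ((∫ t in a..b, (φ t - φ a) * Phi n r j t)
      + ∫ t in a..b, φ a * Phi n r j t) := by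
    rw [hB, intervalIntegral.integral_const_mul, ← intervalIntegral.integral_add hintφΦ1 hintφΦ2]
    congr 1
    apply intervalIntegral.integral_congr
    intro t _
    ring
  have hzero : ∫ t in a..b, φ a * Phi n r j t = 0 := by
    rw [intervalIntegral.integral_const_mul]
    rw [ha, hb]
    rw [Phi_integral_zero hr]
    ring
  have hbound1 : |∫ t in a..b, (φ t - φ a) * Phi n r j t|
      ≤ (C₂ * (1/n) * (1/n)^(2*r+1)) * (1/n) := by
    have := intervalIntegral.norm_integral_le_of_norm_le_const
      (C := C₂ * (1/n) * (1/n)^(2*r+1)) (f := fun t => (φ t - φ a) * Phi n r j t)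
      (a := a) (b := b) ?_
    · rw [Real.norm_eq_abs] at this
      apply le_trans this
      rw [abs_of_nonneg (by linarith : (0:ℝ) ≤ b - a), hlen]
    · intro t ht
      have ht' : t ∈ Set.Icc a b := by
        rw [Set.uIoc_of_le hab] at ht
        exact Set.Ioc_subset_Icc_self ht
      rw [Real.norm_eq_abs, abs_mul]
      apply mul_le_mul
      · calc |φ t - φ a| ≤ C₂ * |t - a| := hφlip t (hsub ht') a haI
          _ ≤ C₂ * (1/n) := by
            apply mul_le_mul_of_nonneg_left _ hC₂0
            rw [abs_of_nonneg (by linarith [ht'.1] : (0:ℝ) ≤ t - a)]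
            linarith [ht'.2, hlen]
      · exact Phi_abs_le hn hr ht'
      · exact abs_nonneg _
      · positivity
  have hcb : |c| ≤ M / (Nat.factorial (2*r+1) : ℝ) := c_bound haI hM
  have hboundB : |∫ t in a..b, B t| ≤ (M / (Nat.factorial (2*r+1) : ℝ))
      * ((C₂ * (1/n) * (1/n)^(2*r+1)) * (1/n)) := by
    rw [hsplitB, hzero, add_zero, abs_mul]
    apply mul_le_mul hcb hbound1 (abs_nonneg _) (by positivity)
  calc |(∫ t in a..b, A t) + ∫ t in a..b, B t|
      ≤ |∫ t in a..b, A t| + |∫ t in a..b, B t| := abs_add_le _ _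
    _ ≤ (C₂ * ((1 + Lam r) * Mρ)) * (1/n) + (M / (Nat.factorial (2*r+1) : ℝ))
        * ((C₂ * (1/n) * (1/n)^(2*r+1)) * (1/n)) := add_le_add hboundA hboundB
    _ = CC r * C₂ * M * (1/n)^(2*r+3) := by
        rw [hMρ, CC, show (1/(n:ℝ))^(2*r+3) = (1/n)^(2*r+1)*(1/n)*(1/n) by ring,
          show (1/(n:ℝ))^(2*r+2) = (1/n)^(2*r+1)*(1/n) by ring]
        ring

end CoreInt
section Cover

variable {n r : ℕ}

lemma cover (hn : 1 ≤ n) {t : ℝ} (ht : t ∈ Set.Icc (0:ℝ) 1) :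
    1 ≤ min n (⌊t * (n:ℝ)⌋₊ + 1) ∧ min n (⌊t * (n:ℝ)⌋₊ + 1) ≤ n ∧
      t ∈ Set.Icc (((min n (⌊t * (n:ℝ)⌋₊ + 1) : ℕ) - 1 : ℝ)/n)
        ((min n (⌊t * (n:ℝ)⌋₊ + 1) : ℕ)/n) := by
  have hn' := npos hn
  set m := ⌊t * (n:ℝ)⌋₊ with hm
  have htn0 : 0 ≤ t * n := mul_nonneg ht.1 hn'.le
  have hfl : (m:ℝ) ≤ t * n := Nat.floor_le htn0
  have hfu : t * n < (m:ℝ) + 1 := Nat.lt_floor_add_one _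
  refine ⟨by omega, min_le_left _ _, ?_, ?_⟩
  · rw [div_le_iff₀ hn']
    rcases le_or_gt (m+1) n with hc | hc
    · rw [min_eq_right hc]
      push_cast
      linarith
    · rw [min_eq_left (by omega)]
      have : ((n:ℝ)) ≤ (m:ℝ) + 1 := by exact_mod_cast hc.le
      linarith
  · rw [le_div_iff₀ hn']
    rcases le_or_gt (m+1) n with hc | hc
    · rw [min_eq_right hc]
      push_cast
      linarith
    · rw [min_eq_left (by omega)]
      nlinarith [ht.2]

/-- Pointwise interpolation error bound on all of `[0,1]`. -/
lemma err_pointwise (hn : 1 ≤ n) (hr : 1 ≤ r) {g : ℝ → ℝ} {M : ℝ}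
    (hg : ContDiffOn ℝ ((2*r+2 : ℕ) : ℕ) g (Set.Icc 0 1))
    (hM : ∀ k, k ≤ 2*r+2 → ∀ u ∈ Set.Icc (0:ℝ) 1, |iteratedDerivWithin k g (Set.Icc 0 1) u| ≤ M)
    {t : ℝ} (ht : t ∈ Set.Icc (0:ℝ) 1) :
    |g t - Qn n r g t| ≤ CC r * M * (1/n)^(2*r+1) := by
  have hn' := npos hn
  obtain ⟨hj1, hj2, htj⟩ := cover hn ht
  set j := min n (⌊t * (n:ℝ)⌋₊ + 1) with hj
  have hQ : Qn n r g t = (interpPoly n r j g).eval t := rfl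
  rw [hQ]
  have hM0 : 0 ≤ M := le_trans (abs_nonneg _) (hM 0 (by omega) 0 (by norm_num))
  have h1n : (0:ℝ) < 1/n := by positivity
  have h1n1 : (1:ℝ)/n ≤ 1 := by
    rw [div_le_one hn']
    exact_mod_cast hn
  -- decompose
  have hdec := interp_decomp hn hr (j := j) g t
  set a : ℝ := (((j:ℝ)-1)/n) with ha
  have haI : a ∈ Set.Icc (0:ℝ) 1 := Icc_piece_subset hn hj1 hj2 (Set.left_mem_Icc.mpr (by
    have := piece_len (n := n) hn (j := j); linarith))
  have h1 := rho_bound hn hr hj1 hj2 hg hM htj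
  have h2 : |iteratedDerivWithin (2*r+1) g (Set.Icc 0 1) a / (Nat.factorial (2*r+1) : ℝ)
      * Phi n r j t| ≤ M / (Nat.factorial (2*r+1) : ℝ) * (1/n)^(2*r+1) := by
    rw [abs_mul]
    exact mul_le_mul (c_bound haI hM) (Phi_abs_le hn hr htj) (abs_nonneg _) (by positivity)
  rw [hdec]
  have hpow : (1/(n:ℝ))^(2*r+2) ≤ (1/(n:ℝ))^(2*r+1) :=
    pow_le_pow_of_le_one h1n.le h1n1 (by omega)
  have hMρle : M * (1/n)^(2*r+2) / (Nat.factorial (2*r+2) : ℝ)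
      ≤ M * (1/n)^(2*r+1) / (Nat.factorial (2*r+2) : ℝ) := by
    calc M * (1/n)^(2*r+2) / (Nat.factorial (2*r+2) : ℝ)
        = (M / (Nat.factorial (2*r+2) : ℝ)) * (1/n)^(2*r+2) := by ring
      _ ≤ (M / (Nat.factorial (2*r+2) : ℝ)) * (1/n)^(2*r+1) :=
          mul_le_mul_of_nonneg_left hpow (by positivity)
      _ = M * (1/n)^(2*r+1) / (Nat.factorial (2*r+2) : ℝ) := by ring
  calc |(g t - (Tpoly g (2*r+1) a).eval t)
        + iteratedDerivWithin (2*r+1) g (Set.Icc 0 1) a / (Nat.factorial (2*r+1) : ℝ)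
            * Phi n r j t
        - ∑ i ∈ Finset.range (2*r+1),
            (g (tau n r j i) - (Tpoly g (2*r+1) a).eval (tau n r j i))
              * (Lagrange.basis (Finset.range (2*r+1)) (tau n r j) i).eval t|
      = |((g t - (Tpoly g (2*r+1) a).eval t)
          - ∑ i ∈ Finset.range (2*r+1),
            (g (tau n r j i) - (Tpoly g (2*r+1) a).eval (tau n r j i))
              * (Lagrange.basis (Finset.range (2*r+1)) (tau n r j) i).eval t)
        + iteratedDerivWithin (2*r+1) g (Set.Icc 0 1) a / (Nat.factorial (2*r+1) : ℝ)
            * Phi n r j t| := by congr 1; ring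
    _ ≤ |(g t - (Tpoly g (2*r+1) a).eval t)
          - ∑ i ∈ Finset.range (2*r+1),
            (g (tau n r j i) - (Tpoly g (2*r+1) a).eval (tau n r j i))
              * (Lagrange.basis (Finset.range (2*r+1)) (tau n r j) i).eval t|
        + |iteratedDerivWithin (2*r+1) g (Set.Icc 0 1) a / (Nat.factorial (2*r+1) : ℝ)
            * Phi n r j t| := abs_add_le _ _
    _ ≤ (1 + Lam r) * (M * (1/n)^(2*r+2) / (Nat.factorial (2*r+2) : ℝ))
        + M / (Nat.factorial (2*r+1) : ℝ) * (1/n)^(2*r+1) := add_le_add h1 h2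
    _ ≤ (1 + Lam r) * (M * (1/n)^(2*r+1) / (Nat.factorial (2*r+2) : ℝ))
        + M / (Nat.factorial (2*r+1) : ℝ) * (1/n)^(2*r+1) := by
        have := Lam_nonneg r
        exact add_le_add (mul_le_mul_of_nonneg_left hMρle (by linarith)) le_rfl
    _ = CC r * M * (1/n)^(2*r+1) := by
        rw [CC]
        field_simp

end Cover
section Super

variable {n r : ℕ}

lemma integ_piece (hn : 1 ≤ n) (hr : 1 ≤ r) {j : ℕ} (hj1 : 1 ≤ j) (hj2 : j ≤ n)
    {g φ : ℝ → ℝ} (hgc : ContinuousOn g (Set.Icc 0 1)) (hφc : ContinuousOn φ (Set.Icc 0 1)) :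
    IntervalIntegrable (fun t => φ t * (g t - Qn n r g t)) volume (((j:ℝ)-1)/n) ((j:ℝ)/n) := by
  have hn' := npos hn
  set a : ℝ := (((j:ℝ)-1)/n) with ha
  set b : ℝ := ((j:ℝ)/n) with hb
  have hlen : b - a = 1/n := piece_len hn
  have hab : a ≤ b := by
    have : (0:ℝ) < 1/n := by positivity
    linarith
  have hsub : Set.Icc a b ⊆ Set.Icc (0:ℝ) 1 := Icc_piece_subset hn hj1 hj2
  have hGc : ContinuousOn (fun t => φ t * (g t - (interpPoly n r j g).eval t)) (Set.Icc a b) :=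
    (hφc.mono hsub).mul ((hgc.mono hsub).sub (Polynomial.continuous_aeval _).continuousOn)
  have hG : IntervalIntegrable (fun t => φ t * (g t - (interpPoly n r j g).eval t)) volume a b :=
    (hGc.mono (by rw [Set.uIcc_of_le hab])).intervalIntegrable
  rw [intervalIntegrable_iff_integrableOn_Ioc_of_le hab] at hG ⊢
  apply hG.congr_fun _ measurableSet_Ioc
  intro t ht
  have ht' : t ∈ Set.Icc a b := Set.Ioc_subset_Icc_self ht
  have heq := Qn_piece hn hr hj1 hj2 g ht'
  simp only [heq]

/-- Superconvergence of K(g - Qₙ g) for a `C₂`-bounded, `C₂`-Lipschitz kernel slice `φ`. -/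
lemma super (hn : 1 ≤ n) (hr : 1 ≤ r) {g : ℝ → ℝ} {M C₂ : ℝ}
    (hg : ContDiffOn ℝ ((2*r+2 : ℕ) : ℕ) g (Set.Icc 0 1))
    (hM : ∀ k, k ≤ 2*r+2 → ∀ u ∈ Set.Icc (0:ℝ) 1, |iteratedDerivWithin k g (Set.Icc 0 1) u| ≤ M)
    {φ : ℝ → ℝ} (hφc : ContinuousOn φ (Set.Icc 0 1))
    (hφb : ∀ u ∈ Set.Icc (0:ℝ) 1, |φ u| ≤ C₂)
    (hφlip : ∀ u ∈ Set.Icc (0:ℝ) 1, ∀ w ∈ Set.Icc (0:ℝ) 1, |φ u - φ w| ≤ C₂ * |u - w|) :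
    |∫ t in (0:ℝ)..1, φ t * (g t - Qn n r g t)| ≤ CC r * C₂ * M * (1/n)^(2*r+2) := by
  have hn' := npos hn
  set F := fun t => φ t * (g t - Qn n r g t) with hF
  set aa : ℕ → ℝ := fun k => (k:ℝ)/n with haa
  have hcast : ∀ k : ℕ, aa k = (((k+1 : ℕ):ℝ)-1)/n := by
    intro k; simp only [haa]; push_cast; ring
  have hcast2 : ∀ k : ℕ, aa (k+1) = ((k+1 : ℕ):ℝ)/n := fun k => rfl
  have hint : ∀ k < n, IntervalIntegrable F volume (aa k) (aa (k+1)) := by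
    intro k hk
    rw [hcast k]
    exact integ_piece hn hr (by omega) (by omega) hg.continuousOn hφc
  have hsum := intervalIntegral.sum_integral_adjacent_intervals hint
  have ha0 : aa 0 = 0 := by simp [haa]
  have han : aa n = 1 := by
    simp only [haa]
    field_simp
  rw [ha0, han] at hsum
  rw [← hsum]
  have hone : ∀ k < n, |∫ t in (aa k)..(aa (k+1)), F t|
      ≤ CC r * C₂ * M * (1/n)^(2*r+3) := by
    intro k hk
    have hj1 : 1 ≤ k+1 := by omega
    have hj2 : k+1 ≤ n := by omega
    have hEq : Set.EqOn F
        (fun t => φ t * (g t - (interpPoly n r (k+1) g).eval t))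
        (Set.uIcc (aa k) (aa (k+1))) := by
      intro t ht
      have hab : aa k ≤ aa (k+1) := by
        rw [hcast k, hcast2 k]
        have := piece_len (n := n) hn (j := k+1)
        have h1n : (0:ℝ) < 1/n := by positivity
        linarith
      rw [Set.uIcc_of_le hab] at ht
      rw [hcast k, hcast2 k] at ht
      simp only [hF]
      rw [Qn_piece hn hr hj1 hj2 g ht]
    rw [intervalIntegral.integral_congr hEq]
    have := core_interval hn hr hj1 hj2 hg hM hφc hφb hφlip
    rw [hcast k, hcast2 k]
    exact this
  calc |∑ k ∈ Finset.range n, ∫ t in (aa k)..(aa (k+1)), F t|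
      ≤ ∑ k ∈ Finset.range n, |∫ t in (aa k)..(aa (k+1)), F t| :=
        Finset.abs_sum_le_sum_abs _ _
    _ ≤ ∑ _k ∈ Finset.range n, CC r * C₂ * M * (1/n)^(2*r+3) := by
        apply Finset.sum_le_sum
        intro k hk
        exact hone k (Finset.mem_range.mp hk)
    _ = n * (CC r * C₂ * M * (1/n)^(2*r+3)) := by
        rw [Finset.sum_const, Finset.card_range, nsmul_eq_mul]
    _ = CC r * C₂ * M * (1/n)^(2*r+2) := by
        have hnne : (n:ℝ) ≠ 0 := hn'.ne'
        rw [pow_succ]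
        field_simp

end Super
section Param

lemma mvt01 {f f' : ℝ → ℝ}
    (hd : ∀ u ∈ Set.Icc (0:ℝ) 1, HasDerivWithinAt f (f' u) (Set.Icc 0 1) u)
    {s s' : ℝ} (hs : s ∈ Set.Icc (0:ℝ) 1) (hs' : s' ∈ Set.Icc (0:ℝ) 1) :
    ∃ ξ ∈ Set.Icc (0:ℝ) 1, |ξ - s| ≤ |s' - s| ∧ f s' - f s = f' ξ * (s' - s) := by
  have hcont : ContinuousOn f (Set.Icc 0 1) := fun u hu => (hd u hu).continuousWithinAt
  rcases lt_trichotomy s s' with h | h | h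
  · have hIoo : Set.Ioo s s' ⊆ Set.Ioo (0:ℝ) 1 := by
      intro u hu; exact ⟨lt_of_le_of_lt hs.1 hu.1, lt_of_lt_of_le hu.2 hs'.2⟩
    have hsub : Set.Icc s s' ⊆ Set.Icc (0:ℝ) 1 := Set.Icc_subset_Icc hs.1 hs'.2
    obtain ⟨c, hc, hceq⟩ := exists_hasDerivAt_eq_slope f f' h (hcont.mono hsub)
      (fun u hu => (hd u (hsub (Set.Ioo_subset_Icc_self hu))).hasDerivAt
        (Icc_mem_nhds (hIoo hu).1 (hIoo hu).2))
    refine ⟨c, hsub (Set.Ioo_subset_Icc_self hc), ?_, ?_⟩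
    · rw [abs_of_nonneg (by linarith [hc.1] : (0:ℝ) ≤ c - s),
        abs_of_nonneg (by linarith : (0:ℝ) ≤ s' - s)]
      linarith [hc.2]
    · rw [hceq]
      exact (div_mul_cancel₀ _ (sub_ne_zero.mpr h.ne')).symm
  · exact ⟨s, hs, by simp [h], by simp [h]⟩
  · have hIoo : Set.Ioo s' s ⊆ Set.Ioo (0:ℝ) 1 := by
      intro u hu; exact ⟨lt_of_le_of_lt hs'.1 hu.1, lt_of_lt_of_le hu.2 hs.2⟩
    have hsub : Set.Icc s' s ⊆ Set.Icc (0:ℝ) 1 := Set.Icc_subset_Icc hs'.1 hs.2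
    obtain ⟨c, hc, hceq⟩ := exists_hasDerivAt_eq_slope f f' h (hcont.mono hsub)
      (fun u hu => (hd u (hsub (Set.Ioo_subset_Icc_self hu))).hasDerivAt
        (Icc_mem_nhds (hIoo hu).1 (hIoo hu).2))
    refine ⟨c, hsub (Set.Ioo_subset_Icc_self hc), ?_, ?_⟩
    · rw [abs_of_nonpos (by linarith [hc.2] : c - s ≤ 0),
        abs_of_nonpos (by linarith : s' - s ≤ 0)]
      linarith [hc.1]
    · rw [hceq, div_mul_eq_mul_div, eq_div_iff (by intro h0; apply h.ne; linarith : s - s' ≠ 0)]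
      ring
lemma lip01 {f f' : ℝ → ℝ} {C₂ : ℝ}
    (hd : ∀ u ∈ Set.Icc (0:ℝ) 1, HasDerivWithinAt f (f' u) (Set.Icc 0 1) u)
    (hb : ∀ u ∈ Set.Icc (0:ℝ) 1, |f' u| ≤ C₂) :
    ∀ u ∈ Set.Icc (0:ℝ) 1, ∀ w ∈ Set.Icc (0:ℝ) 1, |f u - f w| ≤ C₂ * |u - w| := by
  intro u hu w hw
  obtain ⟨ξ, hξ, _, heq⟩ := mvt01 hd hw hu
  rw [heq, abs_mul]
  exact mul_le_mul_of_nonneg_right (hb ξ hξ) (abs_nonneg _)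

lemma hasDeriv_param {G G' : ℝ → ℝ → ℝ}
    (hGd : ∀ t ∈ Set.Icc (0:ℝ) 1, ∀ s ∈ Set.Icc (0:ℝ) 1,
      HasDerivWithinAt (fun u => G u t) (G' s t) (Set.Icc 0 1) s)
    (hG'c : ContinuousOn (fun q : ℝ × ℝ => G' q.1 q.2) (Set.Icc 0 1 ×ˢ Set.Icc 0 1))
    {e : ℝ → ℝ}
    (hei : ∀ s ∈ Set.Icc (0:ℝ) 1, IntervalIntegrable (fun t => G s t * e t) volume 0 1)
    (hei' : ∀ s ∈ Set.Icc (0:ℝ) 1, IntervalIntegrable (fun t => G' s t * e t) volume 0 1)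
    {Be : ℝ} (heb : ∀ t ∈ Set.Icc (0:ℝ) 1, |e t| ≤ Be)
    {s : ℝ} (hs : s ∈ Set.Icc (0:ℝ) 1) :
    HasDerivWithinAt (fun u => ∫ t in (0:ℝ)..1, G u t * e t)
      (∫ t in (0:ℝ)..1, G' s t * e t) (Set.Icc 0 1) s := by
  have hBe0 : 0 ≤ Be := le_trans (abs_nonneg _) (heb 0 (by norm_num))
  rw [hasDerivWithinAt_iff_isLittleO, Asymptotics.isLittleO_iff]
  intro ε hε
  set ε' := ε / (Be + 1) with hε'
  have hε'0 : 0 < ε' := by positivity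
  -- uniform continuity of G'
  have hK : IsCompact (Set.Icc (0:ℝ) 1 ×ˢ Set.Icc (0:ℝ) 1) := isCompact_Icc.prod isCompact_Icc
  have hUC := hK.uniformContinuousOn_of_continuous hG'c
  rw [Metric.uniformContinuousOn_iff] at hUC
  obtain ⟨δ, hδ0, hδ⟩ := hUC ε' hε'0
  rw [Filter.eventually_iff_exists_mem]
  refine ⟨Metric.ball s δ ∩ Set.Icc 0 1, ?_, ?_⟩
  · rw [Metric.mem_nhdsWithin_iff]
    exact ⟨δ, hδ0, subset_rfl⟩
  intro y hy
  obtain ⟨hyb, hyI⟩ := hy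
  have hydist : |y - s| < δ := by
    have := Metric.mem_ball.mp hyb
    rwa [Real.dist_eq] at this
  -- the three integrands are integrable
  have h1 := hei y hyI
  have h2 := hei s hs
  have h3 : IntervalIntegrable (fun t => (y - s) * (G' s t * e t)) volume 0 1 :=
    (hei' s hs).const_mul _
  -- rewrite the difference as a single integral
  have key : (∫ t in (0:ℝ)..1, G y t * e t) - (∫ t in (0:ℝ)..1, G s t * e t)
      - (y - s) * (∫ t in (0:ℝ)..1, G' s t * e t)
      = ∫ t in (0:ℝ)..1, (G y t - G s t - (y - s) * G' s t) * e t := by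
    rw [← intervalIntegral.integral_const_mul, ← intervalIntegral.integral_sub h1 h2,
      ← intervalIntegral.integral_sub (h1.sub h2) h3]
    apply intervalIntegral.integral_congr
    intro t _
    ring
  have hbound : ∀ t ∈ Set.uIoc (0:ℝ) 1,
      ‖(G y t - G s t - (y - s) * G' s t) * e t‖ ≤ (ε' * |y - s|) * Be := by
    intro t ht
    have htI : t ∈ Set.Icc (0:ℝ) 1 := by
      rw [Set.uIoc_of_le (by norm_num : (0:ℝ) ≤ 1)] at ht
      exact Set.Ioc_subset_Icc_self ht
    obtain ⟨ξ, hξI, hξd, hξeq⟩ := mvt01 (f := fun u => G u t) (f' := fun u => G' u t)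
      (hGd t htI) hs hyI
    have hfact : G y t - G s t - (y - s) * G' s t = (G' ξ t - G' s t) * (y - s) := by
      rw [hξeq]; ring
    rw [Real.norm_eq_abs, abs_mul, hfact, abs_mul]
    have hGG : |G' ξ t - G' s t| ≤ ε' := by
      have hlt : |ξ - s| < δ := lt_of_le_of_lt hξd hydist
      have hdd := hδ (ξ, t) (Set.mk_mem_prod hξI htI) (s, t) (Set.mk_mem_prod hs htI) (by
        rw [Prod.dist_eq]
        simp only [Real.dist_eq, sub_self, abs_zero]
        exact max_lt hlt hδ0)
      rw [Real.dist_eq] at hdd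
      exact hdd.le
    have h1 : |G' ξ t - G' s t| * |y - s| ≤ ε' * |y - s| :=
      mul_le_mul_of_nonneg_right hGG (abs_nonneg _)
    exact mul_le_mul h1 (heb t htI) (abs_nonneg _) (by positivity)
  have hnice := intervalIntegral.norm_integral_le_of_norm_le_const hbound
  rw [Real.norm_eq_abs] at hnice
  have final : ‖(∫ t in (0:ℝ)..1, G y t * e t) - (∫ t in (0:ℝ)..1, G s t * e t)
      - (y - s) • (∫ t in (0:ℝ)..1, G' s t * e t)‖ ≤ ε * ‖y - s‖ := by
    rw [smul_eq_mul, Real.norm_eq_abs, key]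
    calc |∫ t in (0:ℝ)..1, (G y t - G s t - (y - s) * G' s t) * e t|
        ≤ (ε' * |y - s|) * Be * |1 - 0| := hnice
      _ = ε' * Be * |y - s| := by rw [abs_of_nonneg (by norm_num : (0:ℝ) ≤ 1 - 0)]; ring
      _ ≤ ε * ‖y - s‖ := by
          rw [Real.norm_eq_abs]
          apply mul_le_mul_of_nonneg_right _ (abs_nonneg _)
          rw [hε', div_mul_eq_mul_div, div_le_iff₀ (by positivity : (0:ℝ) < Be + 1)]
          nlinarith
  exact final

end Param
section Helpers

variable {n r : ℕ}

lemma supNorm_ge {f : ℝ → ℝ} (hf : ContinuousOn f (Set.Icc 0 1)) {u : ℝ}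
    (hu : u ∈ Set.Icc (0:ℝ) 1) : |f u| ≤ supNorm f := by
  have hb : BddAbove (Set.range fun t : Set.Icc (0:ℝ) 1 => |f t.1|) := by
    have hc : IsCompact ((fun t => |f t|) '' (Set.Icc (0:ℝ) 1)) :=
      isCompact_Icc.image_of_continuousOn hf.abs
    have heq : (fun t => |f t|) '' (Set.Icc (0:ℝ) 1)
        = Set.range fun t : Set.Icc (0:ℝ) 1 => |f t.1| := Set.image_eq_range _ _
    rw [heq] at hc
    exact hc.bddAbove
  exact le_ciSup hb (⟨u, hu⟩ : Set.Icc (0:ℝ) 1)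

lemma cknorm_ge {x : ℝ → ℝ} {k m : ℕ} (hm : m ≤ k) :
    supNorm (iteratedDerivWithin m x (Set.Icc 0 1)) ≤ cknorm k x := by
  have hb : BddAbove (Set.range fun i : Fin (k+1) =>
      supNorm (iteratedDerivWithin (i : ℕ) x (Set.Icc 0 1))) :=
    (Set.finite_range _).bddAbove
  have := le_ciSup hb (⟨m, by omega⟩ : Fin (k+1))
  simpa [cknorm] using this

lemma integ_01 (hn : 1 ≤ n) (hr : 1 ≤ r) {g φ : ℝ → ℝ}
    (hgc : ContinuousOn g (Set.Icc 0 1)) (hφc : ContinuousOn φ (Set.Icc 0 1)) :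
    IntervalIntegrable (fun t => φ t * (g t - Qn n r g t)) volume 0 1 := by
  have hn' := npos hn
  set aa : ℕ → ℝ := fun k => (k:ℝ)/n with haa
  have hcast : ∀ k : ℕ, aa k = (((k+1 : ℕ):ℝ)-1)/n := by
    intro k; simp only [haa]; push_cast; ring
  have hint : ∀ k < n, IntervalIntegrable (fun t => φ t * (g t - Qn n r g t))
      volume (aa k) (aa (k+1)) := by
    intro k hk
    rw [hcast k]
    exact integ_piece hn hr (by omega) (by omega) hgc hφc
  have := IntervalIntegrable.trans_iterate hint
  have ha0 : aa 0 = 0 := by simp [haa]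
  have han : aa n = 1 := by simp only [haa]; field_simp
  rwa [ha0, han] at this

lemma sliceCont {F : ℝ → ℝ → ℝ}
    (h : ContinuousOn (fun q : ℝ × ℝ => F q.1 q.2) (Set.Icc 0 1 ×ˢ Set.Icc 0 1))
    {s : ℝ} (hs : s ∈ Set.Icc (0:ℝ) 1) : ContinuousOn (F s) (Set.Icc (0:ℝ) 1) := by
  have := h.comp ((continuous_const.prodMk continuous_id).continuousOn
    (s := Set.Icc (0:ℝ) 1) (f := fun t : ℝ => ((s, t) : ℝ × ℝ)))
    (fun t ht => Set.mk_mem_prod hs ht)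
  exact this

end Helpers

/-- Proposition 3: with `y := K(x − Q_n x)`, `‖K(y − Q_n y)‖_∞ ≤ C ‖x‖_{2r+2,∞} h^{4r+4}` with `C` independent of `n`. -/
theorem stmt_13 (r : ℕ) (hr : 1 ≤ r)
    (κ : ℝ → ℝ → ℝ) (κd : ℕ → ℕ → ℝ → ℝ → ℝ) (C₂ : ℝ) (hC₂ : 0 < C₂)
    (hκ0 : κd 0 0 = κ)
    (hds : ∀ α β : ℕ, α + β + 1 ≤ 2 * r + 3 → ∀ t ∈ Set.Icc (0:ℝ) 1, ∀ s ∈ Set.Icc (0:ℝ) 1,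
      HasDerivWithinAt (fun u => κd α β u t) (κd (α + 1) β s t) (Set.Icc 0 1) s)
    (hdt : ∀ α β : ℕ, α + β + 1 ≤ 2 * r + 3 → ∀ s ∈ Set.Icc (0:ℝ) 1, ∀ t ∈ Set.Icc (0:ℝ) 1,
      HasDerivWithinAt (fun u => κd α β s u) (κd α (β + 1) s t) (Set.Icc 0 1) t)
    (hcont : ∀ α β : ℕ, α + β ≤ 2 * r + 3 →
      ContinuousOn (fun q : ℝ × ℝ => κd α β q.1 q.2) (Set.Icc 0 1 ×ˢ Set.Icc 0 1))
    (hbd : ∀ α β : ℕ, α + β ≤ 2 * r + 3 →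
      ∀ s ∈ Set.Icc (0:ℝ) 1, ∀ t ∈ Set.Icc (0:ℝ) 1, |κd α β s t| ≤ C₂)
    :
    ∃ C : ℝ, 0 < C ∧
      ∀ n : ℕ, 1 ≤ n → ∀ x : ℝ → ℝ, ContDiffOn ℝ (2 * r + 2) x (Set.Icc 0 1) →
        supNorm (Kop κ (fun t =>
            Kop κ (fun u => x u - Qn n r x u) t -
              Qn n r (Kop κ (fun u => x u - Qn n r x u)) t)) ≤
          C * cknorm (2 * r + 2) x * ((1 : ℝ) / n) ^ (4 * r + 4) := by
  have hCC := CC_pos r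
  refine ⟨(CC r * C₂)^2, by positivity, ?_⟩
  intro n hn x hx
  have hn' := npos hn
  have hx' : ContDiffOn ℝ ((2*r+2 : ℕ) : ℕ) x (Set.Icc 0 1) := by exact_mod_cast hx
  set M := cknorm (2 * r + 2) x with hM
  -- bounds on derivatives of x
  have hMx : ∀ k, k ≤ 2*r+2 → ∀ u ∈ Set.Icc (0:ℝ) 1,
      |iteratedDerivWithin k x (Set.Icc 0 1) u| ≤ M := by
    intro k hk u hu
    have hic : ContinuousOn (iteratedDerivWithin k x (Set.Icc 0 1)) (Set.Icc 0 1) :=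
      hx'.continuousOn_iteratedDerivWithin (by exact_mod_cast hk) (uniqueDiffOn_Icc one_pos)
    exact (supNorm_ge hic hu).trans (cknorm_ge hk)
  have hM0 : 0 ≤ M := le_trans (abs_nonneg _) (hMx 0 (by omega) 0 (by norm_num))
  -- pointwise bound on the first interpolation error
  have he1b : ∀ t ∈ Set.Icc (0:ℝ) 1,
      |x t - Qn n r x t| ≤ CC r * M * (1/n)^(2*r+1) := by
    intro t ht
    exact err_pointwise hn hr hx' hMx ht
  -- kernel slices
  have φcont : ∀ k, k ≤ 2*r+3 → ∀ {s : ℝ}, s ∈ Set.Icc (0:ℝ) 1 →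
      ContinuousOn (fun t => κd k 0 s t) (Set.Icc (0:ℝ) 1) := by
    intro k hk s hs
    exact sliceCont (hcont k 0 (by omega)) hs
  have φb : ∀ k, k ≤ 2*r+3 → ∀ {s : ℝ}, s ∈ Set.Icc (0:ℝ) 1 →
      ∀ u ∈ Set.Icc (0:ℝ) 1, |κd k 0 s u| ≤ C₂ := by
    intro k hk s hs u hu
    exact hbd k 0 (by omega) s hs u hu
  have φlip : ∀ k, k ≤ 2*r+2 → ∀ {s : ℝ}, s ∈ Set.Icc (0:ℝ) 1 →
      ∀ u ∈ Set.Icc (0:ℝ) 1, ∀ w ∈ Set.Icc (0:ℝ) 1,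
        |κd k 0 s u - κd k 0 s w| ≤ C₂ * |u - w| := by
    intro k hk s hs
    exact lip01 (f' := fun t => κd k 1 s t)
      (fun u hu => hdt k 0 (by omega) s hs u hu)
      (fun u hu => hbd k 1 (by omega) s hs u hu)
  -- the iterated kernel integrals
  set Y : ℕ → ℝ → ℝ := fun k s => ∫ t in (0:ℝ)..1, κd k 0 s t * (x t - Qn n r x t) with hY
  have hYb : ∀ k, k ≤ 2*r+2 → ∀ s ∈ Set.Icc (0:ℝ) 1,
      |Y k s| ≤ CC r * C₂ * M * (1/n)^(2*r+2) := by
    intro k hk s hs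
    exact super hn hr hx' hMx (φcont k (by omega) hs) (φb k (by omega) hs) (φlip k hk hs)
  have hYd : ∀ k, k ≤ 2*r+2 → ∀ s ∈ Set.Icc (0:ℝ) 1,
      HasDerivWithinAt (Y k) (Y (k+1) s) (Set.Icc 0 1) s := by
    intro k hk s hs
    exact hasDeriv_param (G := κd k 0) (G' := κd (k+1) 0)
      (fun t ht s' hs' => hds k 0 (by omega) t ht s' hs')
      (hcont (k+1) 0 (by omega))
      (fun s' hs' => integ_01 hn hr hx'.continuousOn (φcont k (by omega) hs'))
      (fun s' hs' => integ_01 hn hr hx'.continuousOn (φcont (k+1) (by omega) hs'))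
      he1b hs
  have hDY : ∀ k, k ≤ 2*r+1 →
      Set.EqOn (derivWithin (Y k) (Set.Icc 0 1)) (Y (k+1)) (Set.Icc 0 1) := by
    intro k hk s hs
    exact (hYd k (by omega) s hs).derivWithin ((uniqueDiffOn_Icc one_pos) s hs)
  have hclaim : ∀ m : ℕ, ∀ k : ℕ, k + m ≤ 2*r+2 → ContDiffOn ℝ (m : ℕ) (Y k) (Set.Icc 0 1) := by
    intro m
    induction m with
    | zero =>
      intro k hk
      rw [show ((0:ℕ) : WithTop ℕ∞) = 0 from rfl, contDiffOn_zero]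
      exact fun s hs => (hYd k (by omega) s hs).continuousWithinAt
    | succ m IH =>
      intro k hk
      rw [show ((m+1:ℕ) : WithTop ℕ∞) = (m : WithTop ℕ∞) + 1 by push_cast; rfl]
      rw [contDiffOn_succ_iff_derivWithin (uniqueDiffOn_Icc one_pos)]
      refine ⟨fun s hs => (hYd k (by omega) s hs).differentiableWithinAt, ?_, ?_⟩
      · intro h
        exact absurd h (by simp)
      · exact (IH (k+1) (by omega)).congr (hDY k (by omega))
  have hYcd : ContDiffOn ℝ ((2*r+2 : ℕ) : ℕ) (Y 0) (Set.Icc 0 1) :=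
    hclaim (2*r+2) 0 (by omega)
  have hYiter : ∀ k, k ≤ 2*r+2 →
      Set.EqOn (iteratedDerivWithin k (Y 0) (Set.Icc 0 1)) (Y k) (Set.Icc 0 1) := by
    intro k
    induction k with
    | zero => intro _ s hs; simp
    | succ k IH =>
      intro hk s hs
      rw [iteratedDerivWithin_succ]
      rw [derivWithin_congr (IH (by omega)) (IH (by omega) hs)]
      exact hDY k (by omega) hs
  have hMy : ∀ k, k ≤ 2*r+2 → ∀ u ∈ Set.Icc (0:ℝ) 1,
      |iteratedDerivWithin k (Y 0) (Set.Icc 0 1) u| ≤ CC r * C₂ * M * (1/n)^(2*r+2) := by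
    intro k hk u hu
    rw [hYiter k hk hu]
    exact hYb k hk u hu
  have hfinal : ∀ s ∈ Set.Icc (0:ℝ) 1,
      |∫ t in (0:ℝ)..1, κd 0 0 s t * (Y 0 t - Qn n r (Y 0) t)|
        ≤ CC r * C₂ * (CC r * C₂ * M * (1/n)^(2*r+2)) * (1/n)^(2*r+2) := by
    intro s hs
    exact super hn hr hYcd hMy (φcont 0 (by omega) hs) (φb 0 (by omega) hs)
      (φlip 0 (by omega) hs)
  -- identify Kop κ (x - Qn x) with Y 0
  have hKY : Kop κ (fun u => x u - Qn n r x u) = Y 0 := by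
    funext s
    show (∫ t in (0:ℝ)..1, κ s t * (x t - Qn n r x t))
      = ∫ t in (0:ℝ)..1, κd 0 0 s t * (x t - Qn n r x t)
    rw [hκ0]
  rw [hKY]
  haveI : Nonempty (Set.Icc (0:ℝ) 1) := ⟨⟨0, by norm_num⟩⟩
  apply ciSup_le
  intro s
  have hs : (s:ℝ) ∈ Set.Icc (0:ℝ) 1 := s.2
  have hb := hfinal s hs
  have hshow : Kop κ (fun t => Y 0 t - Qn n r (Y 0) t) s.1
      = ∫ t in (0:ℝ)..1, κd 0 0 s.1 t * (Y 0 t - Qn n r (Y 0) t) := by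
    show (∫ t in (0:ℝ)..1, κ s.1 t * (Y 0 t - Qn n r (Y 0) t)) = _
    rw [hκ0]
  rw [hshow]
  apply le_trans hb
  have hpow : ((1:ℝ)/n)^(4*r+4) = ((1:ℝ)/n)^(2*r+2) * ((1:ℝ)/n)^(2*r+2) := by
    rw [← pow_add]
    congr 1
    omega
  rw [hpow]
  ring_nf
  apply le_of_eq
  ring
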